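/- arXiv:1804.10675 — 2 statements merged into one kernel-verified Lean document; each statement's English description precedes it below -/
import Mathlib

section
/- The map (τ, ν) ↦ (τ/ν, τ(τ+1)/ν² + y τ²/ν²) from (0,∞)² to ℝ² is injective for any fixed y > 0. -/
/-- Identifiability of the Gamma PSD parameters from the first two
Marcenko-Pastur moments: for fixed `y > 0`, the map
`(τ, ν) ↦ (τ/ν, τ(τ+1)/ν² + y τ²/ν²)` is injective on `(0,∞)²`. -/
theorem stmt13 (y : ℝ) (hy : 0 < y) :
    Set.InjOn
      (fun p : ℝ × ℝ =>
        (p.1 / p.2, p.1 * (p.1 + 1) / p.2 ^ 2 + y * p.1 ^ 2 / p.2 ^ 2))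
      (Set.Ioi 0 ×ˢ Set.Ioi 0) := by
  rintro ⟨a, b⟩ ⟨ha, hb⟩ ⟨c, d⟩ ⟨hc, hd⟩ h
  simp only [Set.mem_Ioi, Prod.mk.injEq] at *
  obtain ⟨h1, h2⟩ := h
  have hb0 : b ≠ 0 := ne_of_gt hb
  have hd0 : d ≠ 0 := ne_of_gt hd
  -- from h1: a * d = c * b
  have e1 : a * d = c * b := by field_simp at h1; linarith
  -- second moments: derive a * d^2 = c * b^2
  have e1sq : a ^ 2 * d ^ 2 = c ^ 2 * b ^ 2 := by
    rw [show a ^ 2 * d ^ 2 = (a * d) ^ 2 by ring,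
      show c ^ 2 * b ^ 2 = (c * b) ^ 2 by ring, e1]
  have e2 : a * d ^ 2 = c * b ^ 2 := by
    field_simp at h2
    linear_combination h2 - (1 + y) * e1sq
  have hbd : b = d := by
    have key : c * b * d = c * b * b := by linear_combination e2 - d * e1
    have hcb : c * b ≠ 0 := by positivity
    have := mul_left_cancel₀ hcb key
    linarith
  constructor
  · subst hbd
    exact mul_right_cancel₀ hb0 e1
  · exact hbd
end

section
/- Let H, H' be compactly supported probability measures on [0,∞) and y > 0. If ψ_{y,H}(α) = ψ_{y,H'}(α) for all α in some nonempty open interval lying strictly above both supports, then ∫ tʲ dH(t) = ∫ tʲ dH'(t) for all j ≥ 1, and hence H = H'. -/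
open MeasureTheory

open scoped NNReal ENNReal

private lemma aux_ae_Icc {μ : Measure ℝ} {b : ℝ}
    (h0 : μ (Set.Iio 0) = 0) (hb : μ (Set.Ioi b) = 0) :
    ∀ᵐ t ∂μ, t ∈ Set.Icc 0 b := by
  have hsub : (Set.Icc 0 b)ᶜ ⊆ Set.Iio 0 ∪ Set.Ioi b := by
    intro t ht
    simp only [Set.mem_compl_iff, Set.mem_Icc, not_and_or, not_le] at ht
    rcases ht with h | h
    · exact Or.inl h
    · exact Or.inr h
  have hz : μ (Set.Icc 0 b)ᶜ = 0 :=
    le_antisymm ((measure_mono hsub).trans ((measure_union_le _ _).trans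
      (by simp [h0, hb]))) (zero_le)
  exact MeasureTheory.mem_ae_iff.mpr hz

private lemma aux_pow_integrable {μ : Measure ℝ} [IsFiniteMeasure μ] {b : ℝ}
    (hae : ∀ᵐ t ∂μ, t ∈ Set.Icc 0 b) (j : ℕ) :
    Integrable (fun t => t ^ j) μ := by
  refine Integrable.mono' (integrable_const (b ^ j))
    ((measurable_id.pow_const j).aestronglyMeasurable) ?_
  filter_upwards [hae] with t ht
  rw [Real.norm_eq_abs, abs_pow, abs_of_nonneg ht.1]
  exact pow_le_pow_left₀ ht.1 ht.2 j

private lemma aux_moment_bound {μ : Measure ℝ} [IsProbabilityMeasure μ] {b : ℝ}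
    (hae : ∀ᵐ t ∂μ, t ∈ Set.Icc 0 b) (j : ℕ) :
    |∫ t, t ^ j ∂μ| ≤ b ^ j := by
  have h := norm_integral_le_of_norm_le_const (μ := μ) (f := fun t => t ^ j) (C := b ^ j) ?_
  · simpa [measure_univ] using h
  · filter_upwards [hae] with t ht
    rw [Real.norm_eq_abs, abs_pow, abs_of_nonneg ht.1]
    exact pow_le_pow_left₀ ht.1 ht.2 j

private lemma aux_hasSum {μ : Measure ℝ} [IsProbabilityMeasure μ] {b x : ℝ}
    (hb : 0 ≤ b) (hae : ∀ᵐ t ∂μ, t ∈ Set.Icc 0 b) (hx0 : 0 ≤ x) (hbx : b * x < 1) :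
    HasSum (fun j : ℕ => (∫ t, t ^ j ∂μ) * x ^ j) (∫ t, (1 - t * x)⁻¹ ∂μ) := by
  have hbx0 : 0 ≤ b * x := mul_nonneg hb hx0
  have hint : ∀ j : ℕ, Integrable (fun t => (t * x) ^ j) μ := by
    intro j
    refine Integrable.mono' (integrable_const ((b * x) ^ j))
      (((measurable_id.mul_const x).pow_const j).aestronglyMeasurable) ?_
    filter_upwards [hae] with t ht
    rw [Real.norm_eq_abs, abs_pow, abs_of_nonneg (mul_nonneg ht.1 hx0)]
    exact pow_le_pow_left₀ (mul_nonneg ht.1 hx0) (mul_le_mul_of_nonneg_right ht.2 hx0) j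
  have hnorm : ∀ j : ℕ, ∫ t, ‖(t * x) ^ j‖ ∂μ ≤ (b * x) ^ j := by
    intro j
    have h := norm_integral_le_of_norm_le_const (μ := μ) (f := fun t => ‖(t * x) ^ j‖)
      (C := (b * x) ^ j) ?_
    · calc ∫ t, ‖(t * x) ^ j‖ ∂μ ≤ ‖∫ t, ‖(t * x) ^ j‖ ∂μ‖ := le_abs_self _
        _ ≤ (b * x) ^ j := by simpa [measure_univ] using h
    · filter_upwards [hae] with t ht
      rw [norm_norm, Real.norm_eq_abs, abs_pow, abs_of_nonneg (mul_nonneg ht.1 hx0)]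
      exact pow_le_pow_left₀ (mul_nonneg ht.1 hx0) (mul_le_mul_of_nonneg_right ht.2 hx0) j
  have hsummable : Summable fun j : ℕ => ∫ t, ‖(t * x) ^ j‖ ∂μ :=
    Summable.of_nonneg_of_le (fun j => integral_nonneg fun t => norm_nonneg _) hnorm
      (summable_geometric_of_lt_one hbx0 hbx)
  have key := hasSum_integral_of_summable_integral_norm hint hsummable
  have h1 : ∀ j : ℕ, (∫ t, (t * x) ^ j ∂μ) = (∫ t, t ^ j ∂μ) * x ^ j := by
    intro j
    simp_rw [mul_pow]
    exact integral_mul_const _ _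
  have h2 : (∫ t, (∑' j : ℕ, (t * x) ^ j) ∂μ) = ∫ t, (1 - t * x)⁻¹ ∂μ := by
    refine integral_congr_ae ?_
    filter_upwards [hae] with t ht
    exact tsum_geometric_of_lt_one (mul_nonneg ht.1 hx0)
      (lt_of_le_of_lt (mul_le_mul_of_nonneg_right ht.2 hx0) hbx)
  rw [← h2]
  exact HasSum.congr_fun key fun j => (h1 j).symm

private lemma aux_conv {μ : Measure ℝ} [IsProbabilityMeasure μ] {b x : ℝ} (hb : 0 ≤ b)
    (hae : ∀ᵐ t ∂μ, t ∈ Set.Icc 0 b) (hx0 : 0 < x) (hbx : b * x < 1) :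
    ∫ t, (1 - t * x)⁻¹ ∂μ = 1 + ∫ t, t / (x⁻¹ - t) ∂μ := by
  have hlb : 0 < x⁻¹ - b := by
    have hbx' : b < x⁻¹ := by
      rw [← one_div]
      exact (lt_div_iff₀ hx0).mpr hbx
    linarith
  have hintdiv : Integrable (fun t => t / (x⁻¹ - t)) μ := by
    refine Integrable.mono' (integrable_const (b / (x⁻¹ - b)))
      ((measurable_id.div (measurable_const.sub measurable_id)).aestronglyMeasurable) ?_
    filter_upwards [hae] with t ht
    have hden : x⁻¹ - b ≤ x⁻¹ - t := by linarith [ht.2]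
    have hden0 : 0 < x⁻¹ - t := lt_of_lt_of_le hlb hden
    rw [Real.norm_eq_abs, abs_div, abs_of_nonneg ht.1, abs_of_pos hden0]
    exact div_le_div₀ hb ht.2 hlb hden
  have hcongr : ∫ t, (1 - t * x)⁻¹ ∂μ = ∫ t, (1 + t / (x⁻¹ - t)) ∂μ := by
    refine integral_congr_ae ?_
    filter_upwards [hae] with t ht
    have h1 : 0 < 1 - t * x := by
      have : t * x ≤ b * x := mul_le_mul_of_nonneg_right ht.2 hx0.le
      linarith
    have hden0 : 0 < x⁻¹ - t := by
      have : t ≤ b := ht.2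
      linarith [hlb]
    have hxt : x⁻¹ - t = (1 - t * x) / x := by
      field_simp
    rw [hxt, div_div_eq_mul_div,
      show (1 : ℝ) + t * x / (1 - t * x) = (1 - t * x + t * x) / (1 - t * x) by
        rw [add_div, div_self h1.ne'],
      show 1 - t * x + t * x = 1 by ring, one_div]
  rw [hcongr, integral_add (integrable_const 1) hintdiv]
  simp [measure_univ]

/-- Uniqueness underlying the psi-envelope PSD diagnostic: if two compactly
supported probability measures `H`, `H'` on `[0, ∞)` (supports in `[0, b]`) have
Silverstein maps `ψ_{y,H}(α) = α + yα ∫ t/(α-t) dH(t)` agreeing on a nonempty open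
interval `(c, e)` lying strictly above both supports, then all moments of `H` and
`H'` agree, and `H = H'`. -/
theorem stmt18 (H H' : Measure ℝ) [IsProbabilityMeasure H] [IsProbabilityMeasure H']
    (b y c e : ℝ) (hb : 0 ≤ b)
    (hsupp0 : H (Set.Iio 0) = 0) (hsuppb : H (Set.Ioi b) = 0)
    (hsupp0' : H' (Set.Iio 0) = 0) (hsuppb' : H' (Set.Ioi b) = 0)
    (hy : 0 < y) (hbc : b < c) (hce : c < e)
    (hψ : ∀ α ∈ Set.Ioo c e,
      α + y * α * ∫ t, t / (α - t) ∂H = α + y * α * ∫ t, t / (α - t) ∂H') :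
    (∀ j : ℕ, 1 ≤ j → ∫ t, t ^ j ∂H = ∫ t, t ^ j ∂H') ∧ H = H' := by
  have hae : ∀ᵐ t ∂H, t ∈ Set.Icc 0 b := aux_ae_Icc hsupp0 hsuppb
  have hae' : ∀ᵐ t ∂H', t ∈ Set.Icc 0 b := aux_ae_Icc hsupp0' hsuppb'
  have hc0 : 0 < c := lt_of_le_of_lt hb hbc
  have he0 : 0 < e := hc0.trans hce
  -- basic facts about the interval of `x = α⁻¹`
  have hIoonempty : e⁻¹ < c⁻¹ := inv_strictAnti₀ hc0 hce
  have hxpos : ∀ x ∈ Set.Ioo e⁻¹ c⁻¹, 0 < x := fun x hx => lt_trans (inv_pos.mpr he0) hx.1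
  have hbx : ∀ x ∈ Set.Ioo e⁻¹ c⁻¹, b * x < 1 := by
    intro x hx
    have h1 : b * x ≤ b * c⁻¹ := mul_le_mul_of_nonneg_left hx.2.le hb
    have h2 : b * c⁻¹ < 1 := by
      rw [← div_eq_mul_inv]
      exact (div_lt_one hc0).mpr hbc
    exact lt_of_le_of_lt h1 h2
  -- equality of the generating integrals on the interval
  have heq : ∀ x ∈ Set.Ioo e⁻¹ c⁻¹,
      ∫ t, (1 - t * x)⁻¹ ∂H = ∫ t, (1 - t * x)⁻¹ ∂H' := by
    intro x hx
    have hx0 : 0 < x := hxpos x hx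
    have hα : x⁻¹ ∈ Set.Ioo c e := by
      constructor
      · have := inv_strictAnti₀ hx0 hx.2
        rwa [inv_inv] at this
      · have := inv_strictAnti₀ (inv_pos.mpr he0) hx.1
        rwa [inv_inv] at this
    have hψα := hψ x⁻¹ hα
    have hyα : y * x⁻¹ ≠ 0 := by positivity
    have h1 : (∫ t, t / (x⁻¹ - t) ∂H) = ∫ t, t / (x⁻¹ - t) ∂H' :=
      mul_left_cancel₀ hyα (add_left_cancel hψα)
    rw [aux_conv hb hae hx0 (hbx x hx), aux_conv hb hae' hx0 (hbx x hx), h1]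
  -- power series setup
  set m : ℕ → ℝ := fun j => ∫ t, t ^ j ∂H with hm_def
  set m' : ℕ → ℝ := fun j => ∫ t, t ^ j ∂H' with hm'_def
  set p : FormalMultilinearSeries ℝ ℝ ℝ := FormalMultilinearSeries.ofScalars ℝ m with hp_def
  set q : FormalMultilinearSeries ℝ ℝ ℝ := FormalMultilinearSeries.ofScalars ℝ m' with hq_def
  set r : ℝ≥0 := ⟨c⁻¹, (inv_pos.mpr hc0).le⟩ with hr_def
  have hrpos : (0 : ℝ≥0∞) < (r : ℝ≥0∞) := by
    rw [ENNReal.coe_pos]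
    exact inv_pos.mpr hc0
  have hradius : ∀ (μ : Measure ℝ) (inst : IsProbabilityMeasure μ),
      (∀ᵐ t ∂μ, t ∈ Set.Icc 0 b) →
      (r : ℝ≥0∞) ≤ (FormalMultilinearSeries.ofScalars ℝ (fun j => ∫ t, t ^ j ∂μ)).radius := by
    intro μ inst hμae
    refine FormalMultilinearSeries.le_radius_of_bound _ 1 fun n => ?_
    have hnorm : ‖FormalMultilinearSeries.ofScalars ℝ (fun j => ∫ t, t ^ j ∂μ) n‖
        = |∫ t, t ^ n ∂μ| := by
      rw [FormalMultilinearSeries.ofScalars_norm, Real.norm_eq_abs]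
    rw [hnorm]
    have h1 : |∫ t, t ^ n ∂μ| * (r : ℝ) ^ n ≤ b ^ n * c⁻¹ ^ n := by
      have hr' : (r : ℝ) = c⁻¹ := rfl
      rw [hr']
      exact mul_le_mul_of_nonneg_right (aux_moment_bound hμae n) (by positivity)
    refine h1.trans ?_
    rw [← mul_pow]
    refine pow_le_one₀ (by positivity) ?_
    rw [← div_eq_mul_inv]
    exact (div_le_one hc0).mpr hbc.le
  have hpr : (r : ℝ≥0∞) ≤ p.radius := hradius H ‹_› hae
  have hqr : (r : ℝ≥0∞) ≤ q.radius := hradius H' ‹_› hae'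
  have hpball : HasFPowerSeriesOnBall p.sum p 0 r :=
    (p.hasFPowerSeriesOnBall (lt_of_lt_of_le hrpos hpr)).mono hrpos hpr
  have hqball : HasFPowerSeriesOnBall q.sum q 0 r :=
    (q.hasFPowerSeriesOnBall (lt_of_lt_of_le hrpos hqr)).mono hrpos hqr
  -- the interval sits inside the ball
  have hIoosub : Set.Ioo e⁻¹ c⁻¹ ⊆ Metric.eball (0 : ℝ) r := by
    rw [Metric.emetric_ball_nnreal]
    intro z hz
    rw [Metric.mem_ball, dist_zero_right, Real.norm_eq_abs, abs_of_pos (hxpos z hz)]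
    exact hz.2
  -- sums agree on the interval
  have hsum_eq : Set.EqOn p.sum q.sum (Set.Ioo e⁻¹ c⁻¹) := by
    intro z hz
    have hz0 : 0 < z := hxpos z hz
    have h1 : p.sum z = ∫ t, (1 - t * z)⁻¹ ∂H := by
      have hs := (aux_hasSum hb hae hz0.le (hbx z hz)).tsum_eq
      rw [show p.sum = FormalMultilinearSeries.ofScalarsSum m from rfl,
        FormalMultilinearSeries.ofScalars_sum_eq]
      simpa [smul_eq_mul] using hs
    have h2 : q.sum z = ∫ t, (1 - t * z)⁻¹ ∂H' := by
      have hs := (aux_hasSum hb hae' hz0.le (hbx z hz)).tsum_eq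
      rw [show q.sum = FormalMultilinearSeries.ofScalarsSum m' from rfl,
        FormalMultilinearSeries.ofScalars_sum_eq]
      simpa [smul_eq_mul] using hs
    rw [h1, h2]
    exact heq z hz
  -- identity theorem
  set z₀ : ℝ := (e⁻¹ + c⁻¹) / 2 with hz₀_def
  have hz₀mem : z₀ ∈ Set.Ioo e⁻¹ c⁻¹ := by
    constructor <;> · rw [hz₀_def]; linarith
  have hfg : p.sum =ᶠ[nhds z₀] q.sum :=
    Filter.eventually_of_mem (isOpen_Ioo.mem_nhds hz₀mem) hsum_eq
  have hprecon : IsPreconnected (Metric.eball (0 : ℝ) (r : ℝ≥0∞)) := by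
    rw [Metric.emetric_ball_nnreal]
    exact (convex_ball _ _).isPreconnected
  have hEq : Set.EqOn p.sum q.sum (Metric.eball (0 : ℝ) (r : ℝ≥0∞)) :=
    AnalyticOnNhd.eqOn_of_preconnected_of_eventuallyEq hpball.analyticOnNhd
      hqball.analyticOnNhd hprecon (hIoosub hz₀mem) hfg
  have h0mem : (0 : ℝ) ∈ Metric.eball (0 : ℝ) (r : ℝ≥0∞) := EMetric.mem_ball_self hrpos
  have hnb : p.sum =ᶠ[nhds (0 : ℝ)] q.sum :=
    Filter.eventually_of_mem (EMetric.isOpen_ball.mem_nhds h0mem) hEq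
  have hpq : p = q :=
    (hpball.hasFPowerSeriesAt.congr hnb).eq_formalMultilinearSeries hqball.hasFPowerSeriesAt
  have hmm' : m = m' := by
    rwa [hp_def, hq_def, FormalMultilinearSeries.ofScalars_series_eq_iff] at hpq
  have hmom : ∀ j : ℕ, ∫ t, t ^ j ∂H = ∫ t, t ^ j ∂H' := fun j => congrFun hmm' j
  refine ⟨fun j _ => hmom j, ?_⟩
  -- equality of integrals of polynomials
  have hpoly : ∀ P : Polynomial ℝ, ∫ t, P.eval t ∂H = ∫ t, P.eval t ∂H' := by
    intro P
    have key : ∀ (μ : Measure ℝ) (inst : IsProbabilityMeasure μ),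
        (∀ᵐ t ∂μ, t ∈ Set.Icc 0 b) →
        ∫ t, P.eval t ∂μ
          = ∑ i ∈ Finset.range (P.natDegree + 1), P.coeff i * ∫ t, t ^ i ∂μ := by
      intro μ inst hμae
      rw [show (fun t => P.eval t) = fun t =>
          ∑ i ∈ Finset.range (P.natDegree + 1), P.coeff i * t ^ i from
        funext fun t => Polynomial.eval_eq_sum_range _]
      rw [integral_finset_sum _ fun i _ => (aux_pow_integrable hμae i).const_mul _]
      exact Finset.sum_congr rfl fun i _ => integral_const_mul _ _
    rw [key H ‹_› hae, key H' ‹_› hae']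
    exact Finset.sum_congr rfl fun i _ => by rw [hmom i]
  -- equality of integrals of bounded continuous functions
  have hbcf : ∀ (g : ℝ → ℝ) (C : ℝ), Continuous g → (∀ x, |g x| ≤ C) →
      ∫ t, g t ∂H = ∫ t, g t ∂H' := by
    intro g C hg hgC
    have hgint : ∀ (μ : Measure ℝ) (inst : IsProbabilityMeasure μ), Integrable g μ := by
      intro μ inst
      exact Integrable.mono' (integrable_const C) hg.aestronglyMeasurable
        (Filter.Eventually.of_forall fun t => by rw [Real.norm_eq_abs]; exact hgC t)
    refine eq_of_forall_dist_le fun ε hε => ?_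
    obtain ⟨P, hP⟩ := exists_polynomial_near_of_continuousOn 0 b g hg.continuousOn
      (ε / 2) (by positivity)
    have hPint : ∀ (μ : Measure ℝ) (inst : IsProbabilityMeasure μ),
        (∀ᵐ t ∂μ, t ∈ Set.Icc 0 b) → Integrable (fun t => P.eval t) μ := by
      intro μ inst hμae
      refine Integrable.mono' (integrable_const (C + ε / 2))
        (P.continuous_aeval.aestronglyMeasurable) ?_
      filter_upwards [hμae] with t ht
      have h1 := (hP t ht).le
      have h2 := hgC t
      rw [Real.norm_eq_abs]
      have h3 : |P.eval t| - |g t| ≤ |P.eval t - g t| := abs_sub_abs_le_abs_sub _ _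
      linarith
    have hdiff : ∀ (μ : Measure ℝ) (inst : IsProbabilityMeasure μ),
        (∀ᵐ t ∂μ, t ∈ Set.Icc 0 b) →
        |(∫ t, g t ∂μ) - ∫ t, P.eval t ∂μ| ≤ ε / 2 := by
      intro μ inst hμae
      rw [← integral_sub (hgint μ inst) (hPint μ inst hμae)]
      have h := norm_integral_le_of_norm_le_const (μ := μ)
        (f := fun t => g t - P.eval t) (C := ε / 2) ?_
      · simpa [measure_univ] using h
      · filter_upwards [hμae] with t ht
        rw [Real.norm_eq_abs, abs_sub_comm]
        exact (hP t ht).le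
    have hH := hdiff H ‹_› hae
    have hH' := hdiff H' ‹_› hae'
    have hPP := hpoly P
    rw [Real.dist_eq]
    have htri : |(∫ t, g t ∂H) - ∫ t, g t ∂H'|
        ≤ |(∫ t, g t ∂H) - ∫ t, P.eval t ∂H|
          + |(∫ t, g t ∂H') - ∫ t, P.eval t ∂H'| := by
      have h1 : (∫ t, g t ∂H) - ∫ t, g t ∂H'
          = ((∫ t, g t ∂H) - ∫ t, P.eval t ∂H)
            - ((∫ t, g t ∂H') - ∫ t, P.eval t ∂H') := by
        rw [hPP]; ring
      rw [h1]
      exact abs_sub _ _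
    linarith
  -- conclude equality of measures
  refine ext_of_forall_lintegral_eq_of_IsFiniteMeasure fun f => ?_
  have hcoe : Continuous fun x => ((f x : ℝ)) := NNReal.continuous_coe.comp f.continuous
  obtain ⟨C, hC⟩ := f.bounded
  have hbound : ∀ x, |((f x : ℝ))| ≤ (f 0 : ℝ) + C := by
    intro x
    rw [abs_of_nonneg (f x).coe_nonneg]
    have h1 : dist (f x) (f 0) ≤ C := hC x 0
    have h2 : ((f x : ℝ)) - ((f 0 : ℝ)) ≤ dist (f x) (f 0) := by
      rw [NNReal.dist_eq]
      exact le_abs_self _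
    linarith
  have hfint : ∀ (μ : Measure ℝ) (inst : IsProbabilityMeasure μ),
      Integrable (fun x => ((f x : ℝ))) μ := by
    intro μ inst
    exact Integrable.mono' (integrable_const ((f 0 : ℝ) + C)) hcoe.aestronglyMeasurable
      (Filter.Eventually.of_forall fun t => by rw [Real.norm_eq_abs]; exact hbound t)
  rw [lintegral_coe_eq_integral _ (hfint H ‹_›), lintegral_coe_eq_integral _ (hfint H' ‹_›)]
  rw [hbcf (fun x => ((f x : ℝ))) ((f 0 : ℝ) + C) hcoe hbound]
end
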